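/- Let λ ∈ ℂ with λ ≠ 0. For d1, d2 ∈ ℕ define c d1 d2 = (1/((2d1+1)!·(2d2+1)!)) · iteratedDeriv (2d2+1) (fun u2 : ℂ => iteratedDeriv (2d1+1) (fun u1 : ℂ => u1^3 * u2 * (-u1 - u2)^((2*(d1:ℤ)+2*(d2:ℤ)-2)) ) λ) λ, the iterated residue at (u1,u2)=(λ,λ) of u1^3u2(-u1-u2)^{2(d1+d2-1)}/((u1-λ)^{2(d1+1)}(u2-λ)^{2(d2+1)}). Then for all z1, z2 ∈ ℂ with |z1| < 1/100 and |z2| < 1/100, HasSum (fun p : ℕ × ℕ => z1^p.1 * z2^p.2 * c p.1 p.2) (((1-z2)^2 + z1*(6 - 7*z1 - 10*z2)) / (8*(1 - 2*(z1+z2) + (z1-z2)^2))). -/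

import Mathlib

open Finset
open scoped Nat

noncomputable def gam (d1 d2 : ℕ) : ℂ :=
  if d1 = 0 ∧ d2 = 0 then 1/8 else (Nat.choose (2*(d1+d2)-2) (2*d2) : ℂ)



lemma iteratedDeriv_congr_nhds {f g : ℂ → ℂ} {x : ℂ} (n : ℕ) (h : f =ᶠ[nhds x] g) :
    iteratedDeriv n f x = iteratedDeriv n g x := by
  have key : deriv^[n] f =ᶠ[nhds x] deriv^[n] g := by
    induction n with
    | zero => exact h
    | succ n ih =>
      rw [Function.iterate_succ_apply', Function.iterate_succ_apply']
      exact ih.deriv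
  rw [iteratedDeriv_eq_iterate, iteratedDeriv_eq_iterate]
  exact key.eq_of_nhds

lemma iter_zpow_sum {ι : Type*} (s : Finset ι) (b : ι → ℂ) (k : ι → ℤ) (a : ℂ) :
    ∀ (n : ℕ) (x : ℂ), x + a ≠ 0 →
      iteratedDeriv n (fun y => ∑ j ∈ s, b j * (y + a)^(k j)) x
        = ∑ j ∈ s, b j * (∏ i ∈ Finset.range n, ((k j - i : ℤ) : ℂ)) * (x + a)^(k j - n) := by
  intro n
  induction n with
  | zero =>
    intro x hx
    simp
  | succ n ih =>
    intro x hx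
    rw [iteratedDeriv_succ]
    have hopen : IsOpen {y : ℂ | y + a ≠ 0} :=
      isOpen_compl_singleton.preimage (continuous_id.add continuous_const)
    have hev : iteratedDeriv n (fun y => ∑ j ∈ s, b j * (y + a)^(k j)) =ᶠ[nhds x]
        (fun y => ∑ j ∈ s, b j * (∏ i ∈ Finset.range n, ((k j - i : ℤ) : ℂ)) * (y + a)^(k j - n)) :=
      Filter.eventually_of_mem (hopen.mem_nhds hx) (fun y hy => ih y hy)
    rw [hev.deriv_eq]
    have hterm : ∀ j ∈ s, HasDerivAt
        (fun y : ℂ => b j * (∏ i ∈ Finset.range n, ((k j - i : ℤ) : ℂ)) * (y + a)^(k j - n))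
        (b j * (∏ i ∈ Finset.range n, ((k j - i : ℤ) : ℂ)) *
          (((k j - n : ℤ) : ℂ) * (x + a)^(k j - n - 1))) x := by
      intro j _
      have h1 := hasDerivAt_zpow (k j - n) (x + a) (Or.inl hx)
      have h2 := h1.comp x ((hasDerivAt_id x).add_const a)
      have h3 : HasDerivAt (fun y : ℂ => (y + a)^(k j - n))
          (((k j - n : ℤ) : ℂ) * (x + a)^(k j - n - 1)) x := by
        simpa [Function.comp_def] using h2
      exact h3.const_mul _
    rw [(HasDerivAt.fun_sum hterm).deriv]
    apply Finset.sum_congr rfl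
    intro j _
    rw [Finset.prod_range_succ]
    have hex : (k j - ((n:ℕ)+1 : ℕ) : ℤ) = k j - n - 1 := by push_cast; ring
    rw [hex]
    ring

noncomputable def prodf (x : ℂ) (n : ℕ) : ℂ := ∏ i ∈ Finset.range n, (x - i)

lemma prodf_congr {x y : ℂ} (n : ℕ) (h : x = y) : prodf x n = prodf y n := by rw [h]

lemma D1 (n : ℕ) (x : ℂ) : prodf (x+1) n - prodf x n = n * prodf x (n-1) := by
  cases n with
  | zero => simp [prodf]
  | succ k =>
    have h1 : prodf (x+1) (k+1) = prodf x k * (x+1) := by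
      rw [prodf, Finset.prod_range_succ']
      congr 1
      · apply Finset.prod_congr rfl
        intro i _
        push_cast
        ring
      · norm_num
    have h2 : prodf x (k+1) = prodf x k * (x - k) := by
      rw [prodf, Finset.prod_range_succ]; rfl
    have h3 : (k+1 : ℕ) - 1 = k := by omega
    rw [h1, h2, h3]
    push_cast
    ring

lemma D2 (n : ℕ) (x : ℂ) : prodf (x+1+1) n - 2*prodf (x+1) n + prodf x n
    = (n:ℂ) * ((n-1 : ℕ):ℂ) * prodf x (n-2) := by
  have h1 := D1 n (x+1)
  have h2 := D1 n x
  have h3 := D1 (n-1) x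
  have hnn : n - 1 - 1 = n - 2 := by omega
  rw [hnn] at h3
  linear_combination h1 - h2 + (n:ℂ) * h3

lemma D3 (n : ℕ) (x : ℂ) : prodf (x+1+1+1) n - 3*prodf (x+1+1) n + 3*prodf (x+1) n - prodf x n
    = (n:ℂ) * ((n-1 : ℕ):ℂ) * ((n-2 : ℕ):ℂ) * prodf x (n-3) := by
  have h1 := D2 n (x+1)
  have h2 := D2 n x
  have h3 := D1 (n-2) x
  have hnn : n - 2 - 1 = n - 3 := by omega
  rw [hnn] at h3
  linear_combination h1 - h2 + (n:ℂ) * ((n-1:ℕ):ℂ) * h3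

lemma factprod (n : ℕ) : prodf (n:ℂ) n = (n ! : ℂ) := by
  induction n with
  | zero => simp [prodf]
  | succ k ih =>
    rw [prodf, Finset.prod_range_succ']
    push_cast
    have h1 : ∏ x ∈ Finset.range k, ((k:ℂ) + 1 - ((x:ℂ) + 1)) = prodf (k:ℂ) k := by
      rw [prodf]
      apply Finset.prod_congr rfl
      intro i _
      ring
    rw [h1, ih]
    push_cast [Nat.factorial_succ]
    ring

lemma descprod (M : ℕ) : ∀ k : ℕ, k ≤ M + 1 → prodf (M:ℂ) k = (M.descFactorial k : ℂ) := by
  intro k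
  induction k with
  | zero => intro _; simp [prodf]
  | succ k ih =>
    intro hk
    rw [prodf, Finset.prod_range_succ, ← prodf]
    rw [ih (by omega), Nat.descFactorial_succ]
    have : ((M - k : ℕ) : ℂ) = (M:ℂ) - k := by
      have : k ≤ M := by omega
      push_cast [this]
      ring
    push_cast [Nat.cast_sub (show k ≤ M by omega)]
    ring

lemma final_identity (d1 d2 : ℕ) (m e : ℤ) (N1 N2 : ℕ) (P1 Q : ℕ → ℂ)
    (hm : m = 2*(d1:ℤ)+2*(d2:ℤ)-2) (he : e = 2*(d2:ℤ)-3)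
    (hN1 : N1 = 2*d1+1) (hN2 : N2 = 2*d2+1)
    (hP1 : ∀ j : ℕ, P1 j = ∏ i ∈ Finset.range N1, ((m + j - i : ℤ) : ℂ))
    (hQ : ∀ t : ℕ, Q t = ∏ i ∈ Finset.range N2, ((e + t - i : ℤ) : ℂ)) :
    ∑ p ∈ Finset.range 4 ×ˢ Finset.range 5,
      (Nat.choose 3 p.1 : ℂ) * (-1:ℂ)^(3-p.1) * P1 p.1 * (Nat.choose (4-p.1) p.2 : ℂ)
        * (-1:ℂ)^(4-p.1-p.2) * (2:ℂ)^((p.1:ℤ) + p.2 - 4) * Q (p.1+p.2)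
      = (N1 ! : ℂ) * (N2 ! : ℂ) * gam d1 d2 := by
  -- helpers about P1 and prodf
  have hP1f : ∀ j : ℕ, P1 j = prodf ((m:ℂ) + j) N1 := by
    intro j
    rw [hP1, prodf]
    apply Finset.prod_congr rfl
    intro i _
    push_cast
    ring
  have hQ4 : Q 4 = (N2 ! : ℂ) := by
    rw [← factprod N2, hQ, prodf]
    apply Finset.prod_congr rfl
    intro i _
    have hz : ((e + (4:ℕ) - i : ℤ) : ℂ) = ((N2:ℤ):ℂ) - i := by
      have : (e + (4:ℕ) - i : ℤ) = (N2:ℤ) - i := by rw [he, hN2]; push_cast; ring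
      rw [this]
      push_cast
      ring
    rw [hz]
    push_cast
    ring
  -- expand the sum
  rw [Finset.sum_product]
  simp only [Finset.sum_range_succ, Finset.sum_range_zero]
  have hQzero : ∀ t i0 : ℕ, i0 < N2 → (e + t - i0 : ℤ) = 0 → Q t = 0 := by
    intro t i0 h1 h2
    rw [hQ]
    refine Finset.prod_eq_zero (Finset.mem_range.mpr h1) ?_
    rw [h2]
    simp
  have hP1zero : ∀ j i0 : ℕ, i0 < N1 → (m + j - i0 : ℤ) = 0 → P1 j = 0 := by
    intro j i0 h1 h2
    rw [hP1]
    refine Finset.prod_eq_zero (Finset.mem_range.mpr h1) ?_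
    rw [h2]
    simp
  norm_num [hQ4, Nat.choose]
  rcases Nat.eq_zero_or_pos d2 with hd2 | hd2
  · -- d2 = 0
    subst hd2
    have hQt : ∀ t : ℕ, Q t = (t:ℂ) - 3 := by
      intro t
      rw [hQ, hN2]
      norm_num [Finset.prod_range_one]
      rw [he]
      push_cast
      ring
    rcases Nat.eq_zero_or_pos d1 with hd1 | hd1
    · -- d1 = d2 = 0
      subst hd1
      have hP1t : ∀ j : ℕ, P1 j = (j:ℂ) - 2 := by
        intro j
        rw [hP1, hN1]
        norm_num [Finset.prod_range_one]
        rw [hm]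
        push_cast
        ring
      rw [hQt 0, hQt 1, hQt 2, hQt 3, hP1t 0, hP1t 1, hP1t 2, hP1t 3, hN1, hN2]
      norm_num [gam, Nat.factorial]
      try ring
    · -- d1 ≥ 1, d2 = 0
      have hp0 : P1 0 = 0 := hP1zero 0 (2*d1-2) (by omega) (by rw [hm]; push_cast; omega)
      have hp1 : P1 1 = 0 := hP1zero 1 (2*d1-1) (by omega) (by rw [hm]; push_cast; omega)
      have hp2 : P1 2 = 0 := hP1zero 2 (2*d1) (by omega) (by rw [hm]; push_cast; omega)
      have hp3 : P1 3 = (N1 ! : ℂ) := by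
        rw [← factprod N1, hP1, prodf]
        apply Finset.prod_congr rfl
        intro i _
        have h : (m + (3:ℕ) - i : ℤ) = (N1:ℤ) - i := by rw [hm, hN1]; push_cast; ring
        rw [h]
        push_cast
        ring
      have hq3 : Q 3 = 0 := by rw [hQt 3]; norm_num
      have hgam : gam d1 0 = 1 := by
        rw [gam, if_neg (by omega)]
        norm_num
      rw [hp0, hp1, hp2, hp3, hq3, hgam, hN2]
      norm_num [Nat.factorial]
  · -- d2 ≥ 1
    have hq1 : Q 1 = 0 := hQzero 1 (2*d2-2) (by omega) (by rw [he]; push_cast; omega)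
    have hq2 : Q 2 = 0 := hQzero 2 (2*d2-1) (by omega) (by rw [he]; push_cast; omega)
    have hq3 : Q 3 = 0 := hQzero 3 (2*d2) (by omega) (by rw [he]; push_cast; omega)
    have hkill : P1 0 * Q 0 = 0 := by
      rcases eq_or_lt_of_le (Nat.succ_le_of_lt hd2) with hd2' | hd2'
      · -- d2 = 1 : P1 0 = 0
        have : P1 0 = 0 := hP1zero 0 (2*d1) (by omega) (by rw [hm]; push_cast; omega)
        rw [this, zero_mul]
      · -- d2 ≥ 2 : Q 0 = 0
        have : Q 0 = 0 := hQzero 0 (2*d2-3) (by omega) (by rw [he]; push_cast; omega)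
        rw [this, mul_zero]
    -- reduce to the finite difference
    have hdiff : P1 3 - 3*P1 2 + 3*P1 1 - P1 0
        = (N1:ℂ) * ((N1-1 : ℕ):ℂ) * ((N1-2 : ℕ):ℂ) * prodf ((m:ℂ)) (N1-3) := by
      have h3 : prodf ((m:ℂ)+1+1+1) N1 = P1 3 := by
        rw [hP1f 3]; exact prodf_congr _ (by push_cast; ring)
      have h2 : prodf ((m:ℂ)+1+1) N1 = P1 2 := by
        rw [hP1f 2]; exact prodf_congr _ (by push_cast; ring)
      have h1 : prodf ((m:ℂ)+1) N1 = P1 1 := by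
        rw [hP1f 1]; exact prodf_congr _ (by push_cast; ring)
      have h0 : prodf ((m:ℂ)) N1 = P1 0 := by
        rw [hP1f 0]; exact prodf_congr _ (by push_cast; ring)
      have := D3 N1 ((m:ℂ))
      rw [h3, h2, h1, h0] at this
      linear_combination this
    have hfin : (N2 ! : ℂ) * ((N1:ℂ) * ((N1-1 : ℕ):ℂ) * ((N1-2 : ℕ):ℂ) * prodf ((m:ℂ)) (N1-3))
        = (N1 ! : ℂ) * (N2 ! : ℂ) * gam d1 d2 := by
      rcases Nat.eq_zero_or_pos d1 with hd1 | hd1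
      · subst hd1
        have h1 : N1 - 1 = 0 := by omega
        have hg : gam 0 d2 = 0 := by
          rw [gam, if_neg (by omega)]
          rw [Nat.choose_eq_zero_of_lt (by omega)]
          norm_num
        rw [h1, hg]
        simp
      · obtain ⟨k, rfl⟩ : ∃ k, d1 = k + 1 := ⟨d1 - 1, by omega⟩
        have hM : (m:ℂ) = ((2*k + 2*d2 : ℕ) : ℂ) := by
          rw [hm]; push_cast; ring
        have h1 : N1 - 1 = 2*k+2 := by omega
        have h2 : N1 - 2 = 2*k+1 := by omega
        have h3 : N1 - 3 = 2*k := by omega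
        rw [hM, h1, h2, h3, descprod (2*k+2*d2) (2*k) (by omega), hN1]
        rw [gam, if_neg (by omega)]
        have hch : (2*(k+1+d2)-2).choose (2*d2) = (2*k+2*d2).choose (2*k) := by
          have hh : 2*(k+1+d2)-2 = 2*k+2*d2 := by omega
          rw [hh]
          have h4 : (2*k+2*d2) - (2*k) = 2*d2 := by omega
          have h5 := Nat.choose_symm (show 2*k ≤ 2*k+2*d2 by omega)
          rw [h4] at h5
          exact h5
        rw [hch]
        have hf : (2*(k+1)+1)! = (2*(k+1)+1) * ((2*k+2) * ((2*k+1) * (2*k)!)) := by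
          rw [show 2*(k+1)+1 = (2*k+2)+1 by ring, Nat.factorial_succ,
            show 2*k+2 = (2*k+1)+1 by ring, Nat.factorial_succ,
            show 2*k+1 = (2*k)+1 by ring, Nat.factorial_succ]
        have hnatC : (((2*k+2*d2).descFactorial (2*k) : ℕ) : ℂ)
            = ((2*k)! : ℂ) * (((2*k+2*d2).choose (2*k) : ℕ) : ℂ) := by
          rw [Nat.descFactorial_eq_factorial_mul_choose]
          push_cast
          ring
        rw [hnatC, hf]
        push_cast
        ring
    linear_combination (-1/16 : ℂ) * hkill + ((1/2)*P1 0 - (3/8)*P1 1) * hq1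
      + (-(3/2)*P1 0 + (9/4)*P1 1 - (3/4)*P1 2) * hq2
      + (2*P1 0 - (9/2)*P1 1 + 3*P1 2 - (1/2)*P1 3) * hq3
      + (N2 ! : ℂ) * hdiff + hfin

lemma partA (Λ : ℂ) (hΛ : Λ ≠ 0) (d1 d2 : ℕ) :
    (1 / (((2*d1+1)! : ℂ) * ((2*d2+1)! : ℂ))) *
      iteratedDeriv (2*d2+1) (fun u2 : ℂ =>
        iteratedDeriv (2*d1+1) (fun u1 : ℂ =>
          u1^3 * u2 * ((-u1 - u2)^(2*(d1:ℤ)+2*(d2:ℤ)-2))) Λ) Λ = gam d1 d2 := by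
  have h2Λ : Λ + Λ ≠ 0 := by
    intro h
    have h' : (2:ℂ) * Λ = 0 := by linear_combination h
    rcases mul_eq_zero.mp h' with h'' | h''
    · norm_num at h''
    · exact hΛ h''
  set m : ℤ := 2*(d1:ℤ)+2*(d2:ℤ)-2 with hm
  set N1 : ℕ := 2*d1+1 with hN1
  set N2 : ℕ := 2*d2+1 with hN2
  set e : ℤ := 2*(d2:ℤ)-3 with he
  set P1 : ℕ → ℂ := fun j => ∏ i ∈ Finset.range N1, ((m + j - i : ℤ) : ℂ) with hP1
  set Q : ℕ → ℂ := fun t => ∏ i ∈ Finset.range N2, ((e + t - i : ℤ) : ℂ) with hQdef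
  have hmeven : Even m := ⟨(d1:ℤ)+(d2:ℤ)-1, by rw [hm]; ring⟩
  -- inner derivative
  have hminner : ∀ u2 : ℂ, Λ + u2 ≠ 0 →
      iteratedDeriv N1 (fun u1 : ℂ => u1^3 * u2 * ((-u1 - u2)^m)) Λ
      = ∑ j ∈ Finset.range 4, ((Nat.choose 3 j : ℂ) * (-u2)^(3-j) * u2) * P1 j
          * (Λ + u2)^(m + (j:ℕ) - (N1:ℕ)) := by
    intro u2 hu2
    have hopen : IsOpen {y : ℂ | y + u2 ≠ 0} :=
      isOpen_compl_singleton.preimage (continuous_id.add continuous_const)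
    have hev : (fun u1 : ℂ => u1^3 * u2 * ((-u1 - u2)^m)) =ᶠ[nhds Λ]
        (fun u1 : ℂ => ∑ j ∈ Finset.range 4,
          ((Nat.choose 3 j : ℂ) * (-u2)^(3-j) * u2) * (u1 + u2)^(m + (j:ℕ))) := by
      refine Filter.eventually_of_mem (hopen.mem_nhds hu2) ?_
      intro y hy
      simp only [Set.mem_setOf_eq] at hy
      show y^3 * u2 * ((-y - u2)^m) = _
      rw [show ((-y - u2) : ℂ) = -(y+u2) by ring, Even.neg_zpow hmeven]
      beta_reduce
      have hz : ∀ t : ℕ, (y+u2)^(m + (t:ℕ)) = (y+u2)^m * (y+u2)^t := by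
        intro t
        rw [zpow_add₀ hy, zpow_natCast]
      rw [Finset.sum_range_succ, Finset.sum_range_succ, Finset.sum_range_succ,
        Finset.sum_range_succ, Finset.sum_range_zero, hz 0, hz 1, hz 2, hz 3]
      norm_num
      ring
    rw [iteratedDeriv_congr_nhds N1 hev]
    exact iter_zpow_sum (Finset.range 4)
      (fun j => (Nat.choose 3 j : ℂ) * (-u2)^(3-j) * u2) (fun j => m + (j:ℕ)) u2 N1 Λ hu2
  -- outer step: eventual equality with a sum of zpowers in u2
  set B : ℕ × ℕ → ℂ := fun p => (Nat.choose 3 p.1 : ℂ) * (-1:ℂ)^(3-p.1) * P1 p.1 *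
      (Nat.choose (4-p.1) p.2 : ℂ) * (-Λ)^(4-p.1-p.2) with hB
  have houter : (fun u2 : ℂ => iteratedDeriv N1 (fun u1 : ℂ => u1^3 * u2 * ((-u1 - u2)^m)) Λ)
      =ᶠ[nhds Λ] (fun u2 : ℂ => ∑ p ∈ Finset.range 4 ×ˢ Finset.range 5,
        B p * (u2 + Λ)^(e + (p.1:ℕ) + (p.2:ℕ))) := by
    have hopen : IsOpen {y : ℂ | y + Λ ≠ 0} :=
      isOpen_compl_singleton.preimage (continuous_id.add continuous_const)
    refine Filter.eventually_of_mem (hopen.mem_nhds h2Λ) ?_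
    intro u2 hu2
    simp only [Set.mem_setOf_eq] at hu2
    have hu2' : Λ + u2 ≠ 0 := by rwa [add_comm]
    show iteratedDeriv N1 _ Λ = _
    rw [hminner u2 hu2']
    have hconv : ∀ j : ℕ, (Λ + u2)^(m + (j:ℕ) - (N1:ℕ)) = (u2+Λ)^e * (u2+Λ)^(j:ℕ) := by
      intro j
      rw [add_comm Λ u2]
      rw [show m + (j:ℕ) - (N1:ℕ) = e + (j:ℕ) by rw [hm, he, hN1]; push_cast; ring]
      rw [zpow_add₀ hu2, zpow_natCast]
    have hconv2 : ∀ j l : ℕ, (u2 + Λ)^(e + (j:ℕ) + (l:ℕ))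
        = (u2+Λ)^e * ((u2+Λ)^(j:ℕ) * (u2+Λ)^(l:ℕ)) := by
      intro j l
      rw [zpow_add₀ hu2, zpow_add₀ hu2, zpow_natCast, zpow_natCast, mul_assoc]
    simp only [hconv]
    rw [Finset.sum_product]
    simp only [hconv2, hB]
    simp only [Finset.sum_range_succ, Finset.sum_range_zero]
    norm_num [Nat.choose]
    ring
  -- outer derivative
  have hval : iteratedDeriv N2
        (fun u2 : ℂ => iteratedDeriv N1 (fun u1 : ℂ => u1^3 * u2 * ((-u1 - u2)^m)) Λ) Λ
      = ∑ p ∈ Finset.range 4 ×ˢ Finset.range 5,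
          B p * (∏ i ∈ Finset.range N2, ((e + (p.1:ℕ) + (p.2:ℕ) - i : ℤ) : ℂ))
            * (Λ + Λ)^(e + (p.1:ℕ) + (p.2:ℕ) - (N2:ℕ)) := by
    rw [iteratedDeriv_congr_nhds N2 houter]
    exact iter_zpow_sum (Finset.range 4 ×ˢ Finset.range 5) B
      (fun p => e + (p.1:ℕ) + (p.2:ℕ)) Λ N2 Λ h2Λ
  rw [hval]
  -- simplify each term
  have hterm : ∀ p ∈ Finset.range 4 ×ˢ Finset.range 5,
      B p * (∏ i ∈ Finset.range N2, ((e + (p.1:ℕ) + (p.2:ℕ) - i : ℤ) : ℂ))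
          * (Λ + Λ)^(e + (p.1:ℕ) + (p.2:ℕ) - (N2:ℕ))
      = (Nat.choose 3 p.1 : ℂ) * (-1:ℂ)^(3-p.1) * P1 p.1 * (Nat.choose (4-p.1) p.2 : ℂ)
          * (-1:ℂ)^(4-p.1-p.2) * (2:ℂ)^((p.1:ℤ) + p.2 - 4) * Q (p.1+p.2) := by
    rintro ⟨j, l⟩ hp
    simp only [Finset.mem_product, Finset.mem_range] at hp
    have hQp : (∏ i ∈ Finset.range N2, ((e + (j:ℕ) + (l:ℕ) - i : ℤ) : ℂ)) = Q (j+l) := by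
      rw [hQdef]
      apply Finset.prod_congr rfl
      intro i _
      congr 1
      push_cast
      ring
    rw [hQp, hB]
    simp only
    by_cases hjl : j + l ≤ 4
    · have hKe : (e + (j:ℕ) + (l:ℕ) - (N2:ℕ) : ℤ) = (j:ℤ) + l - 4 := by
        rw [he, hN2]; push_cast; ring
      rw [hKe]
      have hneg : ((-Λ:ℂ))^(4-j-l) = (-1:ℂ)^(4-j-l) * Λ^(4-j-l) := by rw [neg_pow]
      have hsplit : (Λ + Λ : ℂ)^((j:ℤ) + l - 4) = (2:ℂ)^((j:ℤ)+l-4) * Λ^((j:ℤ)+l-4) := by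
        rw [show (Λ + Λ : ℂ) = 2 * Λ by ring, mul_zpow]
      have h1 : ((j:ℤ) + l - 4) = -((4 - j - l : ℕ) : ℤ) := by omega
      have hcanc : (Λ:ℂ)^(4-j-l) * Λ^((j:ℤ)+l-4) = 1 := by
        rw [h1, zpow_neg, zpow_natCast]
        exact mul_inv_cancel₀ (pow_ne_zero _ hΛ)
      rw [hneg, hsplit]
      linear_combination ((Nat.choose 3 j : ℂ) * (-1:ℂ)^(3-j) * P1 j * (Nat.choose (4-j) l : ℂ)
        * (-1:ℂ)^(4-j-l) * (2:ℂ)^((j:ℤ)+l-4) * Q (j+l)) * hcanc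
    · have hc0 : Nat.choose (4-j) l = 0 := Nat.choose_eq_zero_of_lt (by omega)
      rw [hc0]
      norm_num
  rw [Finset.sum_congr rfl hterm]
  rw [final_identity d1 d2 m e N1 N2 P1 Q hm he hN1 hN2 (fun j => rfl) (fun t => rfl)]
  have hfact1 : ((N1 ! : ℕ) : ℂ) ≠ 0 := Nat.cast_ne_zero.mpr (Nat.factorial_ne_zero _)
  have hfact2 : ((N2 ! : ℕ) : ℂ) ≠ 0 := Nat.cast_ne_zero.mpr (Nat.factorial_ne_zero _)
  field_simp
  try ring

lemma choose_le_two_pow (n k : ℕ) : n.choose k ≤ 2^n := by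
  rcases le_or_gt k n with h | h
  · calc n.choose k ≤ ∑ m ∈ range (n+1), n.choose m :=
        Finset.single_le_sum (f := fun m => n.choose m) (fun _ _ => Nat.zero_le _)
          (Finset.mem_range.2 (Nat.lt_succ_of_le h))
    _ = 2^n := Nat.sum_range_choose n
  · rw [Nat.choose_eq_zero_of_lt h]; exact Nat.zero_le _

lemma even_extract (G : ℕ → ℂ) (n : ℕ) :
    ∑ k ∈ range (2*n+1), ((1+(-1)^k)/2 : ℂ) * G k = ∑ i ∈ range (n+1), G (2*i) := by
  induction n with
  | zero => simp
  | succ n ih =>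
    have h1 : 2*(n+1)+1 = (2*n+1) + 1 + 1 := by ring
    rw [h1, Finset.sum_range_succ, Finset.sum_range_succ, ih, Finset.sum_range_succ]
    have ho : ((-1 : ℂ))^(2*n+1) = -1 := by
      simpa using Odd.neg_one_pow (α := ℂ) ⟨n, by ring⟩
    have he : ((-1 : ℂ))^(2*n+1+1) = 1 := by
      simpa using Even.neg_one_pow (α := ℂ) ⟨n+1, by ring⟩
    rw [ho, he]
    have h2 : 2*n+1+1 = 2*(n+1) := by ring
    rw [h2, Finset.sum_range_succ _ (n+1), Finset.sum_range_succ _ n]; ring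

lemma diag_id (w1 w2 : ℂ) (n : ℕ) :
    ∑ i ∈ range (n+1), (Nat.choose (2*n) (2*i) : ℂ) * w1^(2*n-2*i) * w2^(2*i)
      = ((w1+w2)^(2*n) + (w1-w2)^(2*n))/2 := by
  have e1 : (w1+w2)^(2*n) = ∑ k ∈ range (2*n+1), w2^k * w1^(2*n-k) * (Nat.choose (2*n) k : ℂ) := by
    rw [add_comm w1 w2]; exact add_pow w2 w1 (2*n)
  have e2 : (w1-w2)^(2*n) = ∑ k ∈ range (2*n+1), (-w2)^k * w1^(2*n-k) * (Nat.choose (2*n) k : ℂ) := by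
    rw [show w1 - w2 = -w2 + w1 by ring]; exact add_pow (-w2) w1 (2*n)
  rw [e1, e2, ← Finset.sum_add_distrib, Finset.sum_div]
  rw [← even_extract (fun k => (Nat.choose (2*n) k : ℂ) * w1^(2*n-k) * w2^k) n]
  apply Finset.sum_congr rfl
  intro k _
  rw [neg_pow]
  ring

theorem partB (z1 z2 : ℂ) (h1 : ‖z1‖ < 1/100) (h2 : ‖z2‖ < 1/100) :
    HasSum (fun p : ℕ × ℕ => z1^p.1 * z2^p.2 * gam p.1 p.2)
      (((1-z2)^2 + z1*(6 - 7*z1 - 10*z2)) / (8*(1 - 2*(z1+z2) + (z1-z2)^2))) := by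
  set T := (((1-z2)^2 + z1*(6 - 7*z1 - 10*z2)) / (8*(1 - 2*(z1+z2) + (z1-z2)^2))) with hT
  set f : ℕ × ℕ → ℂ := fun p => z1^p.1 * z2^p.2 * gam p.1 p.2 with hfdef
  -- square roots
  obtain ⟨w1, hw1⟩ := IsAlgClosed.exists_pow_nat_eq z1 (n := 2) (by norm_num)
  obtain ⟨w2, hw2⟩ := IsAlgClosed.exists_pow_nat_eq z2 (n := 2) (by norm_num)
  have hq1 : ‖w1‖^2 < 1/100 := by rw [← norm_pow, hw1]; exact h1
  have hq2 : ‖w2‖^2 < 1/100 := by rw [← norm_pow, hw2]; exact h2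
  have haw1 : ‖w1‖ < 1/10 := by nlinarith [norm_nonneg w1]
  have haw2 : ‖w2‖ < 1/10 := by nlinarith [norm_nonneg w2]
  set α := (w1+w2)^2 with hα
  set β := (w1-w2)^2 with hβ
  have haα : ‖α‖ < 1 := by
    have : ‖w1 + w2‖ ≤ ‖w1‖ + ‖w2‖ := norm_add_le _ _
    have h' : ‖α‖ = ‖w1+w2‖^2 := by rw [hα, norm_pow]
    rw [h']
    nlinarith [norm_nonneg (w1+w2), norm_nonneg w1, norm_nonneg w2, haw1, haw2]
  have haβ : ‖β‖ < 1 := by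
    have : ‖w1 - w2‖ ≤ ‖w1‖ + ‖w2‖ := norm_sub_le _ _
    have h' : ‖β‖ = ‖w1-w2‖^2 := by rw [hβ, norm_pow]
    rw [h']
    nlinarith [norm_nonneg (w1-w2), norm_nonneg w1, norm_nonneg w2, haw1, haw2]
  have hαne : (1:ℂ) - α ≠ 0 := by
    intro h
    have : α = 1 := by linear_combination -h
    rw [this] at haα; norm_num at haα
  have hβne : (1:ℂ) - β ≠ 0 := by
    intro h
    have : β = 1 := by linear_combination -h
    rw [this] at haβ; norm_num at haβ
  have hprod : (1-α)*(1-β) = 1 - 2*(z1+z2) + (z1-z2)^2 := by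
    rw [hα, hβ, ← hw1, ← hw2]; ring
  -- the diagonal sums
  set A : ℕ → ℂ := fun n => ∑ p ∈ Finset.HasAntidiagonal.antidiagonal n, f p with hA
  have hA0 : A 0 = 1/8 := by
    rw [hA]
    simp [f, gam]
  have hAn : ∀ n : ℕ, A (n+1) = z1/2 * α^n + z1/2 * β^n := by
    intro n
    have hαn : α^n = (w1+w2)^(2*n) := by rw [hα, ← pow_mul]
    have hβn : β^n = (w1-w2)^(2*n) := by rw [hβ, ← pow_mul]
    have key := diag_id w1 w2 n
    have step1 : A (n+1) = ∑ i ∈ range (n+2), f (i, n+1-i) := by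
      rw [hA]; exact Finset.Nat.sum_antidiagonal_eq_sum_range_succ_mk f (n+1)
    have step2 : A (n+1) = ∑ i ∈ range (n+2), z1^(n+1-i) * z2^i * gam (n+1-i) i := by
      rw [step1, ← Finset.sum_range_reflect]
      apply Finset.sum_congr rfl
      intro i hi
      rw [Finset.mem_range] at hi
      have e1 : n+2-1-i = n+1-i := by omega
      rw [e1]
      have e2 : n+1-(n+1-i) = i := by omega
      rw [e2]
    have hgam : ∀ i, i ≤ n+1 → gam (n+1-i) i = (Nat.choose (2*n) (2*i) : ℂ) := by
      intro i hi
      rw [gam]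
      rw [if_neg (by omega)]
      congr 2
      omega
    rw [step2]
    have step3 : ∑ i ∈ range (n+2), z1^(n+1-i) * z2^i * gam (n+1-i) i
        = ∑ i ∈ range (n+1), z1^(n+1-i) * z2^i * (Nat.choose (2*n) (2*i) : ℂ) := by
      rw [Finset.sum_range_succ]
      have : gam (n+1-(n+1)) (n+1) = 0 := by
        rw [gam, if_neg (by omega)]
        rw [Nat.choose_eq_zero_of_lt (by omega)]
        norm_num
      rw [this, mul_zero, add_zero]
      exact Finset.sum_congr rfl fun i hi => by
        rw [hgam i (by rw [Finset.mem_range] at hi; omega)]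
    rw [step3]
    have step4 : ∑ i ∈ range (n+1), z1^(n+1-i) * z2^i * (Nat.choose (2*n) (2*i) : ℂ)
        = z1 * ∑ i ∈ range (n+1), (Nat.choose (2*n) (2*i) : ℂ) * w1^(2*n-2*i) * w2^(2*i) := by
      rw [Finset.mul_sum]
      apply Finset.sum_congr rfl
      intro i hi
      rw [Finset.mem_range] at hi
      have e1 : z1^(n+1-i) = z1 * w1^(2*n-2*i) := by
        rw [← hw1, ← pow_mul, ← pow_add]
        congr 1
        omega
      have e2 : z2^i = w2^(2*i) := by rw [← hw2, ← pow_mul]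
      rw [e1, e2]; ring
    rw [step4, key, hαn, hβn]
    ring
  -- geometric sum of A
  have hgeoα : HasSum (fun n : ℕ => α^n) (1-α)⁻¹ := hasSum_geometric_of_norm_lt_one haα
  have hgeoβ : HasSum (fun n : ℕ => β^n) (1-β)⁻¹ := hasSum_geometric_of_norm_lt_one haβ
  have hAtail : HasSum (fun n : ℕ => A (n+1)) (z1/2 * (1-α)⁻¹ + z1/2 * (1-β)⁻¹) := by
    have := (hgeoα.mul_left (z1/2)).add (hgeoβ.mul_left (z1/2))
    rw [show (fun n : ℕ => A (n+1)) = fun n => z1/2 * α^n + z1/2 * β^n from funext hAn]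
    exact this
  have hAsum : HasSum A T := by
    have := (hasSum_nat_add_iff (f := A) 1).mp hAtail
    have hval : z1/2 * (1-α)⁻¹ + z1/2 * (1-β)⁻¹ + ∑ i ∈ range 1, A i = T := by
      rw [Finset.sum_range_one, hA0, hT, ← hprod]
      field_simp
      simp only [hα, hβ, ← hw1, ← hw2]
      ring
    rwa [hval] at this
  -- summability of f
  have hsumf : Summable f := by
    apply Summable.of_norm_bounded (g := fun p : ℕ × ℕ => (1/25 : ℝ)^p.1 * (1/25 : ℝ)^p.2)
    · exact Summable.mul_of_nonneg
        (summable_geometric_of_lt_one (by norm_num) (by norm_num))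
        (summable_geometric_of_lt_one (by norm_num) (by norm_num))
        (fun n => by positivity) (fun n => by positivity)
    · rintro ⟨a, b⟩
      have hg : ‖gam a b‖ ≤ (4:ℝ)^(a+b) := by
        rw [gam]
        split_ifs with h
        · have hn : ‖(1/8 : ℂ)‖ = 1/8 := by norm_num
          rw [hn]
          calc (1/8 : ℝ) ≤ 1 := by norm_num
          _ ≤ (4:ℝ)^(a+b) := one_le_pow₀ (by norm_num)
        · rw [Complex.norm_natCast]
          calc ((Nat.choose (2*(a+b)-2) (2*b) : ℝ)) ≤ ((2:ℝ)^(2*(a+b)-2)) := by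
                exact_mod_cast Nat.cast_le.mpr (choose_le_two_pow _ _)
          _ ≤ (2:ℝ)^(2*(a+b)) := by
              apply pow_le_pow_right₀ (by norm_num)
              omega
          _ = (4:ℝ)^(a+b) := by rw [pow_mul]; norm_num
      have hz1 : ‖z1‖ ≤ 1/100 := le_of_lt h1
      have hz2 : ‖z2‖ ≤ 1/100 := le_of_lt h2
      calc ‖f (a,b)‖ = ‖z1‖^a * ‖z2‖^b * ‖gam a b‖ := by
            rw [hfdef]; simp [norm_mul, norm_pow]
      _ ≤ (1/100:ℝ)^a * (1/100:ℝ)^b * (4:ℝ)^(a+b) := by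
            gcongr <;> first | exact norm_nonneg _ | positivity
      _ = ((1/100)*4:ℝ)^a * ((1/100)*4:ℝ)^b := by rw [mul_pow, mul_pow, pow_add]; ring
      _ = (1/25 : ℝ)^a * (1/25:ℝ)^b := by norm_num
  -- conclude
  have hftsum : HasSum f (∑' p, f p) := hsumf.hasSum
  have hsig : HasSum (f ∘ (Finset.HasAntidiagonal.sigmaAntidiagonalEquivProd (A := ℕ))) (∑' p, f p) :=
    (Equiv.hasSum_iff _).mpr hftsum
  have hfib : ∀ n : ℕ, HasSum (fun c : Finset.HasAntidiagonal.antidiagonal n =>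
      (f ∘ (Finset.HasAntidiagonal.sigmaAntidiagonalEquivProd (A := ℕ))) ⟨n, c⟩) (A n) := by
    intro n
    have := Finset.hasSum (Finset.HasAntidiagonal.antidiagonal n) f
    exact this
  have := HasSum.sigma hsig hfib
  have hTeq : ∑' p, f p = T := HasSum.unique this hAsum
  rwa [hTeq] at hftsum


theorem stmt15 (Λ : ℂ) (hΛ : Λ ≠ 0) (c : ℕ → ℕ → ℂ)
    (hc : ∀ d1 d2 : ℕ, c d1 d2 =
      (1 / (((2*d1+1)! : ℂ) * ((2*d2+1)! : ℂ))) *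
      iteratedDeriv (2*d2+1) (fun u2 : ℂ =>
        iteratedDeriv (2*d1+1) (fun u1 : ℂ =>
          u1^3 * u2 * ((-u1 - u2)^(2*(d1:ℤ)+2*(d2:ℤ)-2))) Λ) Λ) :
    ∀ z1 z2 : ℂ, ‖z1‖ < 1/100 → ‖z2‖ < 1/100 →
      HasSum (fun p : ℕ × ℕ => z1^p.1 * z2^p.2 * c p.1 p.2)
        (((1-z2)^2 + z1*(6 - 7*z1 - 10*z2)) / (8*(1 - 2*(z1+z2) + (z1-z2)^2))) := by
  intro z1 z2 h1 h2
  have hceq : ∀ a b : ℕ, c a b = gam a b := fun a b => by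
    rw [hc]; exact partA Λ hΛ a b
  have hfun : (fun p : ℕ × ℕ => z1^p.1 * z2^p.2 * c p.1 p.2)
      = fun p : ℕ × ℕ => z1^p.1 * z2^p.2 * gam p.1 p.2 := by
    funext p; rw [hceq]
  rw [hfun]
  exact partB z1 z2 h1 h2
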